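/- arXiv:1902.02738 — 2 statements merged into one kernel-verified Lean document; each statement's English description precedes it below -/
import Mathlib

section
/- For z, w ∈ ℂ with |z| > R and |w| > R (both outside the closed disk D_R of radius R), the integral (1/π) ∫_{D_R} 1/((u - z)(conj(u) - conj(w))) dA(u) equals -log(1 - R²/(z·conj(w))). -/
set_option maxHeartbeats 1000000

open MeasureTheory Set Complex Metric

private lemma circle_int (r : ℝ) (hr : 0 < r) (z w : ℂ)
    (hz : r < ‖z‖) (hw : r < ‖w‖) :
    (∫ θ in (0:ℝ)..(2*Real.pi),
      1 / (((r:ℂ) * Complex.exp (θ * I) - z) *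
        ((starRingEnd ℂ) ((r:ℂ) * Complex.exp (θ * I)) - (starRingEnd ℂ) w)))
    = 2 * Real.pi / (z * (starRingEnd ℂ) w - (r:ℂ)^2) := by
  set wb : ℂ := (starRingEnd ℂ) w with hwb
  have hwb0 : wb ≠ 0 := by
    simp [hwb]
    intro h; rw [h] at hw; simp at hw; linarith
  have hw0 : ‖wb‖ = ‖w‖ := by simp [hwb]
  set ζ₀ : ℂ := (r:ℂ)^2 / wb with hζ₀
  have hζ₀mem : ζ₀ ∈ ball (0:ℂ) r := by
    simp only [mem_ball, dist_zero_right, hζ₀, norm_div, norm_pow,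
      Complex.norm_real, Real.norm_eq_abs, abs_of_pos hr, hw0]
    rw [div_lt_iff₀ (lt_trans hr hw)]
    calc r ^ 2 = r * r := sq r
    _ < r * ‖w‖ := by nlinarith
  set h : ℂ → ℂ := fun ζ => (wb * (z - ζ))⁻¹ with hh
  have hdiff : DiffContOnCl ℂ h (ball (0:ℂ) r) := by
    apply DifferentiableOn.diffContOnCl
    rw [closure_ball (0:ℂ) hr.ne']
    apply DifferentiableOn.inv
    · exact (differentiableOn_const _).mul ((differentiableOn_const _).sub differentiableOn_id)
    · intro ζ hζ
      apply mul_ne_zero hwb0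
      rw [sub_ne_zero]
      intro hzζ
      rw [mem_closedBall, dist_zero_right, ← hzζ] at hζ
      linarith
  have key := hdiff.circleIntegral_sub_inv_smul hζ₀mem
  rw [circleIntegral] at key
  simp only [deriv_circleMap, smul_eq_mul] at key
  have hmap : ∀ θ : ℝ, circleMap 0 r θ = (r:ℂ) * Complex.exp (θ * I) := by
    intro θ; simp [circleMap]
  have hptwise : ∀ θ : ℝ,
      circleMap 0 r θ * I * ((circleMap 0 r θ - ζ₀)⁻¹ * h (circleMap 0 r θ)) =
      I * (1 / (((r:ℂ) * Complex.exp (θ * I) - z) *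
        ((starRingEnd ℂ) ((r:ℂ) * Complex.exp (θ * I)) - wb))) := by
    intro θ
    rw [hmap]
    set u : ℂ := (r:ℂ) * Complex.exp (θ * I) with hu
    have habsu : ‖u‖ = r := by
      simp [hu, Complex.norm_exp, abs_of_pos hr]
    have hu0 : u ≠ 0 := by
      intro h0; rw [h0] at habsu; simp at habsu; linarith
    have hcu : (starRingEnd ℂ) u = (r:ℂ)^2 / u := by
      have := Complex.mul_conj u
      rw [eq_div_iff hu0, mul_comm]
      rw [this]
      rw [Complex.normSq_eq_norm_sq, habsu]
      push_cast; ring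
    have huz : u - z ≠ 0 := by
      rw [sub_ne_zero]; intro h0; rw [h0] at habsu; linarith
    have huζ₀ : u - ζ₀ ≠ 0 := by
      rw [sub_ne_zero]; intro h0
      rw [← h0] at hζ₀mem
      rw [mem_ball, dist_zero_right, habsu] at hζ₀mem
      linarith
    have hzu : z - u ≠ 0 := by
      rw [sub_ne_zero]; intro h0; rw [← h0] at habsu; linarith
    rw [hcu, hh]
    simp only []
    have key2 : (u - z) * ((r:ℂ)^2/u - wb) = wb * (z - u) * (u - ζ₀) / u := by
      rw [hζ₀]; field_simp; ring
    rw [key2, one_div, inv_div]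
    field_simp
  simp only [hptwise] at key
  rw [intervalIntegral.integral_const_mul] at key
  have hI : (I:ℂ) ≠ 0 := Complex.I_ne_zero
  have hne : z * wb - (r:ℂ)^2 ≠ 0 := by
    intro h0
    have hzw : z * wb = (r:ℂ)^2 := by linear_combination h0
    have habs := congrArg (‖·‖) hzw
    rw [norm_mul, hw0, norm_pow, Complex.norm_real, Real.norm_eq_abs, abs_of_pos hr] at habs
    nlinarith
  rw [show (2:ℂ)*Real.pi*I*h ζ₀ = I * (2*Real.pi*h ζ₀) by ring] at key
  have hfin := mul_left_cancel₀ hI key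
  rw [hfin, hh, hζ₀]
  simp only []
  rw [show wb * (z - (r:ℂ)^2/wb) = z * wb - (r:ℂ)^2 by field_simp]
  rw [div_eq_mul_inv]


private lemma radial_int (R : ℝ) (hR : 0 < R) (c : ℂ) (hc : R^2 < ‖c‖) :
    ∫ r in (0:ℝ)..R, (r:ℂ) * (2 * Real.pi / (c - (r:ℂ)^2))
      = -(Real.pi : ℂ) * Complex.log (1 - (R:ℂ)^2 / c) := by
  have hc0 : c ≠ 0 := by
    intro h; rw [h] at hc; simp at hc; nlinarith
  have hcpos : 0 < ‖c‖ := by nlinarith [sq_nonneg R]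
  have habs : ∀ r : ℝ, r ∈ Set.uIcc (0:ℝ) R → ‖(r:ℂ)^2‖ < ‖c‖ := by
    intro r hr
    rw [Set.uIcc_of_le hR.le] at hr
    rw [norm_pow, Complex.norm_real, Real.norm_eq_abs, _root_.abs_of_nonneg hr.1]
    nlinarith [hr.1, hr.2, hc]
  have hcr : ∀ r : ℝ, r ∈ Set.uIcc (0:ℝ) R → c - (r:ℂ)^2 ≠ 0 := by
    intro r hr h0
    have he : c = (r:ℂ)^2 := by linear_combination h0
    have h2 := habs r hr
    rw [← he] at h2
    exact lt_irrefl _ h2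
  have hslit : ∀ r : ℝ, r ∈ Set.uIcc (0:ℝ) R → 1 - (r:ℂ)^2/c ∈ Complex.slitPlane := by
    intro r hr
    rw [sub_eq_add_neg]
    apply Complex.mem_slitPlane_of_norm_lt_one
    rw [norm_neg, norm_div,
      div_lt_one hcpos]
    exact habs r hr
  have hsub : ∀ r : ℝ, r ∈ Set.uIcc (0:ℝ) R → 1 - (r:ℂ)^2/c ≠ 0 := fun r hr =>
    Complex.slitPlane_ne_zero (hslit r hr)
  have hderiv : ∀ r ∈ Set.uIcc (0:ℝ) R,
      HasDerivAt (fun t : ℝ => -(Real.pi : ℂ) * Complex.log (1 - (t:ℂ)^2/c))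
        ((r:ℂ) * (2 * Real.pi / (c - (r:ℂ)^2))) r := by
    intro r hr
    have h1 : HasDerivAt (fun ζ : ℂ => 1 - ζ^2/c) (-(2*(r:ℂ)/c)) (r:ℂ) := by
      simpa using ((hasDerivAt_pow 2 ((r:ℂ))).div_const c).const_sub 1
    have h2 := (Complex.hasDerivAt_log (hslit r hr)).comp ((r:ℂ)) h1
    have h3 := (h2.const_mul (-(Real.pi:ℂ))).comp_ofReal
    convert h3 using 1
    · rfl
    field_simp [hsub r hr, hcr r hr]
  have hint : IntervalIntegrable (fun r : ℝ => (r:ℂ) * (2 * Real.pi / (c - (r:ℂ)^2)))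
      volume 0 R := by
    apply ContinuousOn.intervalIntegrable
    apply ContinuousOn.mul (Complex.continuous_ofReal.continuousOn)
    apply ContinuousOn.div continuousOn_const
    · exact Continuous.continuousOn (by continuity)
    · intro r hr
      exact hcr r hr
  rw [intervalIntegral.integral_eq_sub_of_hasDerivAt hderiv hint]
  simp [Complex.log_one]


/-- For `z, w` both outside the closed disk `D_R`:
`(1/π) ∫_{D_R} 1/((u - z)(conj u - conj w)) dA(u) = -log(1 - R²/(z·conj w))`. -/
theorem disk_integral_one_div_outside_outside
    (R : ℝ) (hR : 0 < R) (z w : ℂ)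
    (hz : R < ‖z‖) (hw : R < ‖w‖) :
    ((1 : ℂ) / (Real.pi : ℂ)) *
        ∫ u in Metric.closedBall (0 : ℂ) R,
          1 / ((u - z) * ((starRingEnd ℂ) u - (starRingEnd ℂ) w)) =
      -Complex.log (1 - (R : ℂ) ^ 2 / (z * (starRingEnd ℂ) w)) := by
  set wb : ℂ := (starRingEnd ℂ) w with hwbdef
  have hwabs : ‖wb‖ = ‖w‖ := by simp [hwbdef]
  set c : ℂ := z * wb with hcdef
  have hcabs : R ^ 2 < ‖c‖ := by
    rw [hcdef, norm_mul, hwabs]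
    nlinarith
  set g : ℂ → ℂ := fun u => 1 / ((u - z) * ((starRingEnd ℂ) u - wb)) with hg
  -- continuity of g on the closed ball
  have hgcont : ContinuousOn g (closedBall (0:ℂ) R) := by
    apply ContinuousOn.div continuousOn_const
    · exact ((continuous_id.sub continuous_const).mul
        (Complex.continuous_conj.sub continuous_const)).continuousOn
    · intro u hu
      rw [mem_closedBall, dist_zero_right] at hu
      apply mul_ne_zero
      · rw [sub_ne_zero]; intro h0; rw [h0] at hu; linarith
      · rw [sub_ne_zero]; intro h0
        have := congrArg (‖·‖) h0
        rw [Complex.norm_conj, hwabs] at this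
        rw [this] at hu; linarith
  -- polar coordinates
  have key := Complex.integral_comp_polarCoord_symm
    (Set.indicator (closedBall (0:ℂ) R) g)
  rw [integral_indicator measurableSet_closedBall] at key
  have hsymm : ∀ p : ℝ × ℝ, Complex.polarCoord.symm p
      = (p.1 : ℂ) * Complex.exp (p.2 * I) := by
    intro p
    rw [Complex.polarCoord_symm_apply, Complex.exp_mul_I, Complex.ofReal_cos,
      Complex.ofReal_sin]
  have habs_symm : ∀ p : ℝ × ℝ, ‖Complex.polarCoord.symm p‖ = |p.1| :=
    Complex.norm_polarCoord_symm
  -- restrict target integral to the rectangle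
  have hrect : (∫ p in polarCoord.target,
        p.1 • Set.indicator (closedBall (0:ℂ) R) g (Complex.polarCoord.symm p))
      = ∫ p in Ioc (0:ℝ) R ×ˢ Ioo (-Real.pi) Real.pi,
          p.1 • g (Complex.polarCoord.symm p) := by
    have hmeas : MeasurableSet (Ioc (0:ℝ) R ×ˢ Ioo (-Real.pi) Real.pi) :=
      measurableSet_Ioc.prod measurableSet_Ioo
    rw [show (∫ p in polarCoord.target,
        p.1 • Set.indicator (closedBall (0:ℂ) R) g (Complex.polarCoord.symm p))
      = ∫ p in polarCoord.target,
          Set.indicator (Ioc (0:ℝ) R ×ˢ Ioo (-Real.pi) Real.pi)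
            (fun p => p.1 • g (Complex.polarCoord.symm p)) p from ?_]
    · rw [setIntegral_indicator hmeas, Set.inter_eq_self_of_subset_right ?_]
      rw [polarCoord_target]
      exact Set.prod_mono Ioc_subset_Ioi_self (subset_refl _)
    · apply setIntegral_congr_fun polarCoord.open_target.measurableSet
      intro p hp
      beta_reduce
      rw [polarCoord_target] at hp
      have hp1 : 0 < p.1 := hp.1
      by_cases hpR : p.1 ≤ R
      · rw [Set.indicator_of_mem, Set.indicator_of_mem]
        · exact ⟨⟨hp1, hpR⟩, hp.2⟩
        · rw [mem_closedBall, dist_zero_right, habs_symm,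
            abs_of_pos hp1]
          exact hpR
      · rw [Set.indicator_of_notMem, Set.indicator_of_notMem, smul_zero]
        · intro hmem; exact hpR hmem.1.2
        · intro hmem
          rw [mem_closedBall, dist_zero_right, habs_symm,
            abs_of_pos hp1] at hmem
          exact hpR hmem
  rw [hrect] at key
  -- integrability on the rectangle
  have hintOn : IntegrableOn (fun p : ℝ × ℝ => p.1 • g (Complex.polarCoord.symm p))
      (Ioc (0:ℝ) R ×ˢ Ioo (-Real.pi) Real.pi) volume := by
    apply IntegrableOn.mono_set
      (t := Icc (0:ℝ) R ×ˢ Icc (-Real.pi) Real.pi)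
    · apply ContinuousOn.integrableOn_compact (isCompact_Icc.prod isCompact_Icc)
      apply ContinuousOn.smul (continuous_fst.continuousOn)
      apply hgcont.comp
      · apply Continuous.continuousOn
        have : Continuous fun p : ℝ × ℝ => (p.1 : ℂ) * Complex.exp (p.2 * I) := by
          fun_prop
        simp only [← hsymm] at this
        exact this
      · intro p hp
        rw [mem_closedBall, dist_zero_right, habs_symm]
        rw [abs_le]
        constructor
        · linarith [hp.1.1]
        · exact hp.1.2
    · exact Set.prod_mono Ioc_subset_Icc_self Ioo_subset_Icc_self
  -- Fubini
  rw [Measure.volume_eq_prod, setIntegral_prod _ hintOn] at key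
  -- inner integral
  have hinner : ∀ r ∈ Ioc (0:ℝ) R,
      (∫ θ in Ioo (-Real.pi) Real.pi, (r, θ).1 • g (Complex.polarCoord.symm (r, θ)))
        = (r:ℂ) * (2 * Real.pi / (c - (r:ℂ)^2)) := by
    intro r hr
    have hr0 : 0 < r := hr.1
    have hinteq : (∫ θ in Ioo (-Real.pi) Real.pi,
          (r, θ).1 • g (Complex.polarCoord.symm (r, θ)))
        = r • ∫ θ in (-Real.pi)..Real.pi, g ((r:ℂ) * Complex.exp (θ * I)) := by
      rw [intervalIntegral.integral_of_le (by linarith [Real.pi_pos]),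
        integral_Ioc_eq_integral_Ioo, ← integral_smul]
      apply setIntegral_congr_fun measurableSet_Ioo
      intro θ _
      simp only [hsymm]
    rw [hinteq]
    have hper : Function.Periodic (fun θ : ℝ => g ((r:ℂ) * Complex.exp (θ * I)))
        (2 * Real.pi) := by
      intro θ
      simp only
      congr 2
      push_cast
      rw [add_mul, Complex.exp_add, Complex.exp_two_pi_mul_I, mul_one]
    have hshift := hper.intervalIntegral_add_eq (-Real.pi) 0
    rw [show -Real.pi + 2 * Real.pi = Real.pi by ring, zero_add] at hshift
    rw [hshift, circle_int r hr0 z w (lt_of_le_of_lt hr.2 hz) (lt_of_le_of_lt hr.2 hw)]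
    rw [Complex.real_smul]
  have key2 : (∫ r in Ioc (0:ℝ) R, (r:ℂ) * (2 * Real.pi / (c - (r:ℂ)^2)))
      = ∫ u in closedBall (0:ℂ) R, g u := by
    rw [← key]
    exact (setIntegral_congr_fun measurableSet_Ioc hinner).symm
  -- outer integral
  have houter : (∫ r in Ioc (0:ℝ) R, (r:ℂ) * (2 * Real.pi / (c - (r:ℂ)^2)))
      = -(Real.pi : ℂ) * Complex.log (1 - (R:ℂ)^2 / c) := by
    rw [← intervalIntegral.integral_of_le hR.le]
    exact radial_int R hR c hcabs
  rw [← key2, houter]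
  have hpi : (Real.pi : ℂ) ≠ 0 := by
    exact_mod_cast Real.pi_ne_zero
  field_simp
end

section
/- For two distinct points z, x ∈ ℂ, the improper integral (1/π) ∫_ℂ 1/((u - z)(u - x)) dA(u), understood as the limit over disks D_R (or over the plane with small disks around z and x removed), equals -(conj(z) - conj(x))/(z - x). -/
open MeasureTheory Filter Set Metric

noncomputable section


lemma circle_int_s8 (a : ℂ) {r : ℝ} (hr : 0 < r) (hne : ‖a‖ ≠ r) :
    ∫ θ in Ioo (-Real.pi) Real.pi, (circleMap 0 r θ - a)⁻¹ =
      if r < ‖a‖ then -(2 * Real.pi) / a else 0 := by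
  have h1 : ∫ θ in Ioo (-Real.pi) Real.pi, (circleMap 0 r θ - a)⁻¹
      = ∫ θ in (0:ℝ)..(2*Real.pi), (circleMap 0 r θ - a)⁻¹ := by
    rw [← MeasureTheory.integral_Ioc_eq_integral_Ioo,
      ← intervalIntegral.integral_of_le (by linarith [Real.pi_pos] : -Real.pi ≤ Real.pi)]
    have hp : Function.Periodic (fun θ => (circleMap 0 r θ - a)⁻¹) (2 * Real.pi) :=
      (periodic_circleMap 0 r).comp (fun z => (z - a)⁻¹)
    have := hp.intervalIntegral_add_eq (-Real.pi) 0
    have e1 : -Real.pi + 2 * Real.pi = Real.pi := by ring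
    rw [e1, zero_add] at this
    exact this
  have h0 : ∀ θ : ℝ, circleMap 0 r θ ≠ 0 := by
    intro θ h
    have := norm_circleMap_zero r θ
    rw [h] at this
    simp [abs_of_pos hr] at this
    exact hr.ne' this.symm
  have hI : (∮ z in C(0, r), (z⁻¹ * (z - a)⁻¹))
      = Complex.I * ∫ θ in (0:ℝ)..(2*Real.pi), (circleMap 0 r θ - a)⁻¹ := by
    rw [circleIntegral, ← intervalIntegral.integral_const_mul]
    refine intervalIntegral.integral_congr fun θ _ => ?_
    rw [deriv_circleMap, smul_eq_mul,
      show circleMap 0 r θ * Complex.I * ((circleMap 0 r θ)⁻¹ * (circleMap 0 r θ - a)⁻¹)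
        = Complex.I * (circleMap 0 r θ * (circleMap 0 r θ)⁻¹) * (circleMap 0 r θ - a)⁻¹ from by
          ring, mul_inv_cancel₀ (h0 θ), mul_one]
  rw [h1]
  rcases lt_or_gt_of_ne hne with hgt | hlt
  · -- |a| < r : result 0
    rw [if_neg (by linarith)]
    have hsum : (∮ z in C(0, r), (z⁻¹ * (z - a)⁻¹)) = 0 := by
      rcases eq_or_ne a 0 with rfl | ha
      · have hz := circleIntegral.integral_sub_zpow_of_ne (by decide : (-2:ℤ) ≠ -1) 0 0 r
        refine (circleIntegral.integral_congr hr.le fun z hz' => ?_).trans hz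
        rw [sub_zero, zpow_neg, zpow_two, mul_inv]
      · have hmem : a ∈ ball (0:ℂ) r := by
          simpa [mem_ball_zero_iff] using hgt
        have ci_a : CircleIntegrable (fun z => (z - a)⁻¹) 0 r :=
          circleIntegrable_sub_inv_iff.2 (Or.inr (by
            simp [abs_of_pos hr, hgt.ne]))
        have ci_0 : CircleIntegrable (fun z => (z - 0)⁻¹) 0 r :=
          circleIntegrable_sub_inv_iff.2 (Or.inr (by
            simp [abs_of_pos hr, hr.ne]))
        have e1 := circleIntegral.integral_sub_inv_of_mem_ball hmem
        have e0 := circleIntegral.integral_sub_inv_of_mem_ball (mem_ball_self hr (x := (0:ℂ)))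
        have hsub := circleIntegral.integral_sub ci_a ci_0
        have : (∮ z in C(0, r), ((z - a)⁻¹ - (z - 0)⁻¹)) = 0 := by
          rw [hsub, e1, e0, sub_self]
        calc (∮ z in C(0, r), (z⁻¹ * (z - a)⁻¹))
            = ∮ z in C(0, r), a⁻¹ • ((z - a)⁻¹ - (z - 0)⁻¹) := by
              refine circleIntegral.integral_congr hr.le fun z hz' => ?_
              have hzr : ‖z‖ = r := by
                simpa using hz'
              have hz0 : z ≠ 0 := by
                intro h; rw [h] at hzr; simp at hzr; exact hr.ne' hzr.symm
              have hza : z ≠ a := by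
                intro h; rw [← h] at hgt; rw [hzr] at hgt; exact lt_irrefl _ hgt
              have h1' : z - a ≠ 0 := sub_ne_zero.2 hza
              simp only [smul_eq_mul, sub_zero]
              field_simp
              ring
          _ = a⁻¹ • ∮ z in C(0, r), ((z - a)⁻¹ - (z - 0)⁻¹) := by
              rw [circleIntegral.integral_smul]
          _ = 0 := by rw [this, smul_zero]
    rw [hsum] at hI
    have := hI.symm
    rcases mul_eq_zero.1 this with h | h
    · exact absurd h Complex.I_ne_zero
    · exact h
  · -- r < |a|
    rw [if_pos hlt]
    have ha : a ≠ 0 := by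
      intro h; rw [h] at hlt; simp at hlt; linarith
    have hd : DiffContOnCl ℂ (fun z => (z - a)⁻¹) (ball (0:ℂ) r) := by
      apply DifferentiableOn.diffContOnCl
      rw [closure_ball (0:ℂ) hr.ne']
      intro w hw
      have hwa : w ≠ a := by
        intro h
        rw [mem_closedBall_zero_iff, h] at hw
        linarith
      exact ((differentiableAt_id.sub_const a).inv (sub_ne_zero.2 hwa)).differentiableWithinAt
    have := hd.circleIntegral_sub_inv_smul (mem_ball_self hr (x := (0:ℂ)))
    simp only [sub_zero, smul_eq_mul] at this
    -- this : ∮ z in C(0,r), z⁻¹ * (z-a)⁻¹ = 2πI * (0 - a)⁻¹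
    rw [this] at hI
    have h2 : Complex.I * (∫ θ in (0:ℝ)..(2*Real.pi), (circleMap 0 r θ - a)⁻¹)
        = Complex.I * (-(2 * Real.pi) / a) := by
      rw [← hI]; field_simp
      linear_combination (0:ℂ) * mul_inv_cancel₀ ha
    exact mul_left_cancel₀ Complex.I_ne_zero h2


lemma integrableOn_inv_sub (a : ℂ) (R : ℝ) :
    IntegrableOn (fun u : ℂ => (u - a)⁻¹) (closedBall 0 R) := by
  constructor
  · exact ((measurable_id.sub_const a).inv).aestronglyMeasurable
  · rw [hasFiniteIntegral_iff_norm]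
    simp_rw [norm_inv]
    set μ := volume.restrict (closedBall (0:ℂ) R) with hμ
    have hm : AEMeasurable (fun u : ℂ => ‖u - a‖⁻¹) μ :=
      ((measurable_id.sub_const a).norm.inv).aemeasurable
    rw [lintegral_eq_lintegral_meas_le μ
      (Filter.Eventually.of_forall fun u => inv_nonneg.2 (norm_nonneg _)) hm]
    have hC : ∀ t : ℝ, μ {u : ℂ | t ≤ ‖u - a‖⁻¹} ≤ volume (closedBall (0:ℂ) R) := by
      intro t
      calc μ {u : ℂ | t ≤ ‖u - a‖⁻¹} ≤ μ univ := measure_mono (subset_univ _)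
        _ = volume (closedBall (0:ℂ) R) := by rw [hμ, Measure.restrict_apply_univ]
    have hB : ∀ t : ℝ, 0 < t → μ {u : ℂ | t ≤ ‖u - a‖⁻¹} ≤
        ENNReal.ofReal ((t⁻¹) ^ 2) * volume (ball (0:ℂ) 1) := by
      intro t ht
      have hsub : {u : ℂ | t ≤ ‖u - a‖⁻¹} ⊆ closedBall a t⁻¹ := by
        intro u hu
        simp only [mem_setOf_eq] at hu
        rw [mem_closedBall, dist_eq_norm]
        rcases eq_or_ne (‖u - a‖) 0 with h0 | h0
        · rw [h0]; positivity
        · simpa [inv_inv] using inv_anti₀ ht hu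
      calc μ {u : ℂ | t ≤ ‖u - a‖⁻¹} ≤ volume (closedBall a t⁻¹) :=
            le_trans (Measure.restrict_apply_le _ _) (measure_mono hsub)
        _ = ENNReal.ofReal ((t⁻¹) ^ Module.finrank ℝ ℂ) * volume (ball (0:ℂ) 1) :=
            Measure.addHaar_closedBall volume a (by positivity)
        _ = ENNReal.ofReal ((t⁻¹) ^ 2) * volume (ball (0:ℂ) 1) := by
            rw [Complex.finrank_real_complex]
    calc ∫⁻ t in Ioi (0:ℝ), μ {u : ℂ | t ≤ ‖u - a‖⁻¹}
        ≤ ∫⁻ t in Ioc (0:ℝ) 1 ∪ Ioi 1, μ {u : ℂ | t ≤ ‖u - a‖⁻¹} :=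
          lintegral_mono_set Ioi_subset_Ioc_union_Ioi
      _ ≤ (∫⁻ t in Ioc (0:ℝ) 1, μ {u : ℂ | t ≤ ‖u - a‖⁻¹})
          + ∫⁻ t in Ioi (1:ℝ), μ {u : ℂ | t ≤ ‖u - a‖⁻¹} := lintegral_union_le _ _ _
      _ < ⊤ := by
          refine ENNReal.add_lt_top.2 ⟨?_, ?_⟩
          · calc (∫⁻ t in Ioc (0:ℝ) 1, μ {u : ℂ | t ≤ ‖u - a‖⁻¹})
                ≤ ∫⁻ _t in Ioc (0:ℝ) 1, volume (closedBall (0:ℂ) R) :=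
                  lintegral_mono fun t => hC t
              _ = volume (closedBall (0:ℂ) R) * volume (Ioc (0:ℝ) 1) := setLIntegral_const _ _
              _ < ⊤ := ENNReal.mul_lt_top measure_closedBall_lt_top (by simp)
          · have hbd : ∀ t ∈ Ioi (1:ℝ), μ {u : ℂ | t ≤ ‖u - a‖⁻¹} ≤
                ENNReal.ofReal ((t⁻¹) ^ 2) * volume (ball (0:ℂ) 1) := fun t ht =>
              hB t (lt_trans one_pos ht)
            calc (∫⁻ t in Ioi (1:ℝ), μ {u : ℂ | t ≤ ‖u - a‖⁻¹})
                ≤ ∫⁻ t in Ioi (1:ℝ), ENNReal.ofReal ((t⁻¹) ^ 2) * volume (ball (0:ℂ) 1) :=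
                  setLIntegral_mono' measurableSet_Ioi hbd
              _ = (∫⁻ t in Ioi (1:ℝ), ENNReal.ofReal ((t⁻¹) ^ 2)) * volume (ball (0:ℂ) 1) :=
                  lintegral_mul_const' _ _ measure_ball_lt_top.ne
              _ < ⊤ := by
                  refine ENNReal.mul_lt_top ?_ measure_ball_lt_top
                  have heq : ∀ t ∈ Ioi (1:ℝ), ENNReal.ofReal ((t⁻¹) ^ 2)
                      = ENNReal.ofReal (t ^ (-2 : ℝ)) := by
                    intro t ht
                    have ht0 : (0:ℝ) < t := lt_trans one_pos ht
                    congr 1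
                    rw [show (-2:ℝ) = ((-2:ℤ):ℝ) by norm_num, Real.rpow_intCast]
                    norm_num [zpow_neg, inv_pow]
                  rw [setLIntegral_congr_fun measurableSet_Ioi
                    heq]
                  exact (integrableOn_Ioi_rpow_of_lt (by norm_num) one_pos).setLIntegral_lt_top

lemma key_integral (a : ℂ) {R : ℝ} (hR : ‖a‖ < R) :
    ∫ u in closedBall (0:ℂ) R, (u - a)⁻¹ = -(Real.pi : ℂ) * (starRingEnd ℂ) a := by
  have hR0 : 0 < R := lt_of_le_of_lt (norm_nonneg a) hR
  set f : ℂ → ℂ := (closedBall (0:ℂ) R).indicator (fun u => (u - a)⁻¹) with hf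
  have h1 : Integrable f :=
    (integrableOn_inv_sub a R).integrable_indicator measurableSet_closedBall
  set F : ℝ × ℝ → ℂ := fun q => f (Complex.measurableEquivRealProd.symm q) with hFdef
  have hFi : Integrable F :=
    ((Complex.volume_preserving_equiv_real_prod.symm).integrable_comp_emb
      (Complex.measurableEquivRealProd.symm.measurableEmbedding)).2 h1
  -- Jacobian data
  set B : ℝ × ℝ → ℝ × ℝ →L[ℝ] ℝ × ℝ := fun p =>
    LinearMap.toContinuousLinearMap (Matrix.toLin (Module.Basis.finTwoProd ℝ) (Module.Basis.finTwoProd ℝ)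
      !![Real.cos p.2, -p.1 * Real.sin p.2; Real.sin p.2, p.1 * Real.cos p.2]) with hB
  have hBdet : ∀ p : ℝ × ℝ, (B p).det = p.1 := by
    intro p
    conv_rhs => rw [← one_mul p.1, ← Real.cos_sq_add_sin_sq p.2]
    simp only [hB, neg_mul, LinearMap.det_toContinuousLinearMap, LinearMap.det_toLin,
      Matrix.det_fin_two_of, sub_neg_eq_add]
    ring
  have hder : ∀ p ∈ polarCoord.target,
      HasFDerivWithinAt polarCoord.symm (B p) polarCoord.target p :=
    fun p _ => (hasFDerivAt_polarCoord_symm p).hasFDerivWithinAt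
  have hinj : InjOn polarCoord.symm polarCoord.target := polarCoord.symm.injOn
  have hiff := integrableOn_image_iff_integrableOn_abs_det_fderiv_smul volume
    polarCoord.open_target.measurableSet hder hinj F
  have hprodInt : IntegrableOn (fun p : ℝ × ℝ => |(B p).det| • F (polarCoord.symm p))
      polarCoord.target := by
    refine hiff.1 ?_
    rw [polarCoord.symm_image_target_eq_source]
    exact hFi.integrableOn
  have hsymm : ∀ p : ℝ × ℝ, F (polarCoord.symm p) = f (Complex.polarCoord.symm p) :=
    fun p => rfl
  have hprodInt' : IntegrableOn (fun p : ℝ × ℝ => p.1 • f (Complex.polarCoord.symm p))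
      polarCoord.target := by
    refine hprodInt.congr_fun (fun p hp => ?_) polarCoord.open_target.measurableSet
    rw [polarCoord_target] at hp
    beta_reduce
    rw [hsymm, hBdet, abs_of_pos hp.1]
  have hCsymm : ∀ r θ : ℝ, Complex.polarCoord.symm (r, θ) = circleMap 0 r θ := by
    intro r θ
    simp [circleMap, Complex.exp_mul_I, Complex.ofReal_cos, Complex.ofReal_sin]
  -- the main computation
  have step1 : ∫ u in closedBall (0:ℂ) R, (u - a)⁻¹ = ∫ u, f u :=
    (integral_indicator measurableSet_closedBall).symm
  have step2 : (∫ u, f u)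
      = ∫ p in polarCoord.target, p.1 • f (Complex.polarCoord.symm p) :=
    (Complex.integral_comp_polarCoord_symm f).symm
  have step3 : (∫ p in polarCoord.target, p.1 • f (Complex.polarCoord.symm p))
      = ∫ r in Ioi (0:ℝ), ∫ θ in Ioo (-Real.pi) Real.pi,
          r • f (Complex.polarCoord.symm (r, θ)) := by
    rw [polarCoord_target]
    rw [Measure.volume_eq_prod] at hprodInt' ⊢
    rw [polarCoord_target] at hprodInt'
    exact setIntegral_prod _ hprodInt'
  -- a.e. identification of the inner integral
  have hnull : (volume : Measure ℝ) ({‖a‖, R} : Set ℝ) = 0 :=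
    (Set.countable_insert.2 (Set.countable_singleton _)).measure_zero _
  have hae : ∀ᵐ r : ℝ, r ∈ Ioi (0:ℝ) →
      (∫ θ in Ioo (-Real.pi) Real.pi, r • f (Complex.polarCoord.symm (r, θ)))
        = (Ioo (0:ℝ) (‖a‖)).indicator
            (fun r : ℝ => (r : ℂ) * (-(2 * Real.pi) / a)) r := by
    filter_upwards [measure_eq_zero_iff_ae_notMem.1 hnull] with r hr hr0
    simp only [mem_insert_iff, mem_singleton_iff, not_or] at hr
    obtain ⟨hra, hrR⟩ := hr
    rw [mem_Ioi] at hr0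
    rcases lt_or_gt_of_ne hrR with hlt | hgt
    · -- r < R : inner circle integral
      have hmem : ∀ θ : ℝ, Complex.polarCoord.symm (r, θ) ∈ closedBall (0:ℂ) R := by
        intro θ
        rw [mem_closedBall_zero_iff, Complex.norm_polarCoord_symm]
        rw [abs_of_pos hr0]
        exact hlt.le
      have : (∫ θ in Ioo (-Real.pi) Real.pi, r • f (Complex.polarCoord.symm (r, θ)))
          = r • ∫ θ in Ioo (-Real.pi) Real.pi, (circleMap 0 r θ - a)⁻¹ := by
        rw [← integral_smul]
        refine setIntegral_congr_fun measurableSet_Ioo fun θ _ => ?_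
        rw [hf]
        rw [indicator_of_mem (hmem θ), hCsymm]
      rw [this, circle_int_s8 a hr0 (fun h => hra h.symm)]
      rcases lt_or_gt_of_ne hra with hra1 | hra2
      · rw [if_pos hra1, indicator_of_mem (Set.mem_Ioo.2 ⟨hr0, hra1⟩)]
        simp [Complex.real_smul]
      · rw [if_neg (by linarith), indicator_of_notMem (fun h => by
          exact absurd h.2 (by linarith))]
        simp
    · -- R < r : integrand vanishes
      have hnm : ∀ θ : ℝ, Complex.polarCoord.symm (r, θ) ∉ closedBall (0:ℂ) R := by
        intro θ h
        rw [mem_closedBall_zero_iff, Complex.norm_polarCoord_symm,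
          abs_of_pos hr0] at h
        linarith
      have hz : (∫ θ in Ioo (-Real.pi) Real.pi, r • f (Complex.polarCoord.symm (r, θ))) = 0 := by
        have hzz : ∀ θ : ℝ, r • f (Complex.polarCoord.symm (r, θ)) = 0 := fun θ => by
          rw [hf, indicator_of_notMem (hnm θ), smul_zero]
        simp only [hzz, integral_zero]
      rw [hz, indicator_of_notMem (fun h => by
        have := h.2; have := hR; linarith)]
  have step4 : (∫ r in Ioi (0:ℝ), ∫ θ in Ioo (-Real.pi) Real.pi,
        r • f (Complex.polarCoord.symm (r, θ)))
      = ∫ r in Ioo (0:ℝ) (‖a‖), (r : ℂ) * (-(2 * Real.pi) / a) := by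
    rw [setIntegral_congr_ae measurableSet_Ioi hae, setIntegral_indicator measurableSet_Ioo,
      inter_eq_self_of_subset_right Ioo_subset_Ioi_self]
  have step5 : (∫ r in Ioo (0:ℝ) (‖a‖), (r : ℂ) * (-(2 * Real.pi) / a))
      = ((‖a‖ ^ 2 / 2 : ℝ) : ℂ) * (-(2 * Real.pi) / a) := by
    rw [← MeasureTheory.integral_Ioc_eq_integral_Ioo,
      ← intervalIntegral.integral_of_le (norm_nonneg a),
      intervalIntegral.integral_mul_const]
    congr 1
    have : (fun r : ℝ => (r : ℂ)) = fun r : ℝ => ((id r : ℝ) : ℂ) := rfl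
    rw [intervalIntegral.integral_ofReal (f := fun r : ℝ => r), integral_id]
    norm_num
  rw [step1, step2, step3, step4, step5]
  rcases eq_or_ne a 0 with rfl | ha
  · simp
  · have hc : a * (starRingEnd ℂ) a = ((‖a‖ : ℝ) : ℂ) ^ 2 := by
      rw [Complex.mul_conj]; norm_cast; rw [Complex.sq_norm]
    have h2 : ((‖a‖ ^ 2 / 2 : ℝ) : ℂ) = a * (starRingEnd ℂ) a / 2 := by
      rw [hc]; push_cast; ring
    rw [h2]
    field_simp


/-- The improper plane integral `(1/π) ∫_ℂ 1/((u-z)(u-x)) dA(u)`, understood as the limit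
over disks `D_R` as `R → ∞`, equals `-(conj z - conj x)/(z - x)`. -/
theorem plane_integral_two_point
    (z x : ℂ) (hzx : z ≠ x) :
    Tendsto
      (fun R : ℝ =>
        ((1 : ℂ) / (Real.pi : ℂ)) *
          ∫ u in Metric.closedBall (0 : ℂ) R, 1 / ((u - z) * (u - x)))
      atTop
      (nhds (-((starRingEnd ℂ) z - (starRingEnd ℂ) x) / (z - x))) := by
  have hπ : (Real.pi : ℂ) ≠ 0 := by exact_mod_cast Real.pi_ne_zero
  have h3 : z - x ≠ 0 := sub_ne_zero.2 hzx
  have hconst : ∀ᶠ R in atTop,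
      ((1 : ℂ) / (Real.pi : ℂ)) * ∫ u in Metric.closedBall (0 : ℂ) R, 1 / ((u - z) * (u - x))
        = -((starRingEnd ℂ) z - (starRingEnd ℂ) x) / (z - x) := by
    filter_upwards [eventually_ge_atTop (max (‖z‖) (‖x‖) + 1)] with R hRge
    have hz : ‖z‖ < R := by
      have := le_max_left (‖z‖) (‖x‖); linarith
    have hx : ‖x‖ < R := by
      have := le_max_right (‖z‖) (‖x‖); linarith
    have hsplit : (∫ u in closedBall (0:ℂ) R, 1 / ((u - z) * (u - x)))
        = ∫ u in closedBall (0:ℂ) R, (z - x)⁻¹ * ((u - z)⁻¹ - (u - x)⁻¹) := by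
      refine setIntegral_congr_ae measurableSet_closedBall ?_
      have hnull : (volume : Measure ℂ) ({z, x} : Set ℂ) = 0 :=
        (Set.countable_insert.2 (Set.countable_singleton _)).measure_zero _
      filter_upwards [measure_eq_zero_iff_ae_notMem.1 hnull] with u hu _
      simp only [mem_insert_iff, mem_singleton_iff, not_or] at hu
      obtain ⟨huz, hux⟩ := hu
      have h1 : u - z ≠ 0 := sub_ne_zero.2 huz
      have h2 : u - x ≠ 0 := sub_ne_zero.2 hux
      field_simp
      ring
    have hInt : (∫ u in closedBall (0:ℂ) R, ((u - z)⁻¹ - (u - x)⁻¹))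
        = (∫ u in closedBall (0:ℂ) R, (u - z)⁻¹) - ∫ u in closedBall (0:ℂ) R, (u - x)⁻¹ :=
      integral_sub (integrableOn_inv_sub z R) (integrableOn_inv_sub x R)
    rw [hsplit, integral_const_mul, hInt, key_integral z hz, key_integral x hx]
    field_simp
    ring
  exact Tendsto.congr' (EventuallyEq.symm hconst) tendsto_const_nhds
end
end
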